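/- Let K ≥ 2, let i⋆ ∈ {1,…,K}, let σ : {1,…,K} → ℝ be strictly positive, and let p : {1,…,K} → ℝ be strictly positive with Σ_{i=1}^K p_i = 1. For j ≠ i⋆ set h^j = (σ_{i⋆}²/p_{i⋆})/(σ_{i⋆}²/p_{i⋆} + σ_j²/p_j) and μ_j = p_j/(1 − h^j). If the sum-of-squares balance condition p_{i⋆}²/σ_{i⋆}² = Σ_{j ≠ i⋆} p_j²/σ_j² holds, then μ_j > 0 for every j ≠ i⋆ and Σ_{j ≠ i⋆} μ_j = 1, i.e., (μ_j)_{j ≠ i⋆} is a probability vector. -/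

import Mathlib

/-- If the sum-of-squares balance condition holds for a strictly positive
allocation `p` in the probability simplex, then the dual weights
`μ_j = p_j/(1 − h^j)` (with `h^j = (σ_{i⋆}²/p_{i⋆})/(σ_{i⋆}²/p_{i⋆} + σ_j²/p_j)`)
form a probability vector over `j ≠ i⋆`. -/
theorem stmt1 (K : ℕ) (hK : 2 ≤ K) (istar : Fin K)
    (σ p : Fin K → ℝ) (hσ : ∀ i, 0 < σ i) (hp : ∀ i, 0 < p i)
    (hsum : ∑ i, p i = 1)
    (hbal : p istar ^ 2 / σ istar ^ 2 =
      ∑ j ∈ Finset.univ.filter (· ≠ istar), p j ^ 2 / σ j ^ 2) :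
    (∀ j, j ≠ istar →
      0 < p j / (1 - (σ istar ^ 2 / p istar) / (σ istar ^ 2 / p istar + σ j ^ 2 / p j))) ∧
    ∑ j ∈ Finset.univ.filter (· ≠ istar),
        p j / (1 - (σ istar ^ 2 / p istar) / (σ istar ^ 2 / p istar + σ j ^ 2 / p j)) = 1 := by
  have ha : 0 < σ istar ^ 2 / p istar := div_pos (pow_pos (hσ istar) 2) (hp istar)
  have key : ∀ j : Fin K,
      p j / (1 - (σ istar ^ 2 / p istar) / (σ istar ^ 2 / p istar + σ j ^ 2 / p j)) =
      σ istar ^ 2 / p istar * (p j ^ 2 / σ j ^ 2) + p j := by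
    intro j
    have hb : 0 < σ j ^ 2 / p j := div_pos (pow_pos (hσ j) 2) (hp j)
    have hab : 0 < σ istar ^ 2 / p istar + σ j ^ 2 / p j := add_pos ha hb
    have hpj := (hp j).ne'
    have hσj := (pow_pos (hσ j) 2).ne'
    have hpi := (hp istar).ne'
    have hσi := (pow_pos (hσ istar) 2).ne'
    have h1 : 1 - (σ istar ^ 2 / p istar) / (σ istar ^ 2 / p istar + σ j ^ 2 / p j)
        = (σ j ^ 2 / p j) / (σ istar ^ 2 / p istar + σ j ^ 2 / p j) := by
      rw [eq_div_iff hab.ne', sub_mul, div_mul_cancel₀ _ hab.ne']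
      ring
    rw [h1, div_div_eq_mul_div, div_div_eq_mul_div]
    rw [div_eq_iff (by positivity)]
    have hσj0 := (hσ j).ne'
    field_simp
  have hpos : ∀ j, j ≠ istar →
      0 < p j / (1 - (σ istar ^ 2 / p istar) / (σ istar ^ 2 / p istar + σ j ^ 2 / p j)) := by
    intro j _
    rw [key j]
    have hb : 0 < σ istar ^ 2 / p istar * (p j ^ 2 / σ j ^ 2) :=
      mul_pos ha (div_pos (pow_pos (hp j) 2) (pow_pos (hσ j) 2))
    linarith [hp j]
  refine ⟨hpos, ?_⟩
  have hsum' : ∑ j ∈ Finset.univ.filter (· ≠ istar), p j = 1 - p istar := by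
    have := Finset.sum_filter_add_sum_filter_not Finset.univ (· ≠ istar) p
    simp only [not_ne_iff, Finset.filter_eq', Finset.mem_univ, if_true,
      Finset.sum_singleton] at this
    linarith [this.trans hsum]
  calc ∑ j ∈ Finset.univ.filter (· ≠ istar),
        p j / (1 - (σ istar ^ 2 / p istar) / (σ istar ^ 2 / p istar + σ j ^ 2 / p j))
      = ∑ j ∈ Finset.univ.filter (· ≠ istar),
        (σ istar ^ 2 / p istar * (p j ^ 2 / σ j ^ 2) + p j) := by
        exact Finset.sum_congr rfl fun j _ => key j
    _ = σ istar ^ 2 / p istar * ∑ j ∈ Finset.univ.filter (· ≠ istar), (p j ^ 2 / σ j ^ 2)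
        + ∑ j ∈ Finset.univ.filter (· ≠ istar), p j := by
        rw [Finset.sum_add_distrib, Finset.mul_sum]
    _ = 1 := by
        rw [← hbal, hsum']
        have hpi := (hp istar).ne'
        have hσi := (pow_pos (hσ istar) 2).ne'
        have hσi0 := (hσ istar).ne'
        field_simp
        ring
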